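/- arXiv:1008.3117 — 6 statements merged into one kernel-verified Lean document; each statement's English description precedes it below -/
import Mathlib

section
/- Let Q be a binary quadratic form and let ℓ be a nonzero linear form in x₁, x₂ over ℂ. Then the three binary quadratic forms Q, ℓ², and ((Q,ℓ)₁)² are linearly dependent over ℂ. -/
open MvPolynomial Finset

/-- `k`-fold partial derivative with respect to variable `i`. -/
noncomputable def pd (i : Fin 2) (k : ℕ) (p : MvPolynomial (Fin 2) ℂ) :
    MvPolynomial (Fin 2) ℂ :=
  (fun q => pderiv i q)^[k] p

/-- The `r`-th transvectant of binary forms `A`, `B` of orders `m`, `n`: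
`(A,B)_r = ((m−r)!(n−r)!/(m!·n!)) · Σ_{i=0}^{r} (−1)^i C(r,i)
  (∂^r A/∂x₁^{r−i}∂x₂^i)(∂^r B/∂x₂^{r−i}∂x₁^i)`. -/
noncomputable def transv (m n r : ℕ) (A B : MvPolynomial (Fin 2) ℂ) :
    MvPolynomial (Fin 2) ℂ :=
  ((((m - r).factorial * (n - r).factorial : ℕ) : ℂ) / ((m.factorial * n.factorial : ℕ) : ℂ)) •
    ∑ i ∈ range (r + 1),
      ((-1 : ℂ) ^ i * (r.choose i : ℂ)) •
        (pd 0 (r - i) (pd 1 i A) * pd 1 (r - i) (pd 0 i B))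

lemma fin2_deg (d : Fin 2 →₀ ℕ) : d.degree = d 0 + d 1 := by
  rw [Finsupp.degree_apply, Finset.sum_subset (Finset.subset_univ _)
    (by simp [Finsupp.notMem_support_iff] )]
  exact Fin.sum_univ_two d

lemma fin2_eq (d : Fin 2 →₀ ℕ) : d = Finsupp.single 0 (d 0) + Finsupp.single 1 (d 1) := by
  ext i
  fin_cases i <;> simp [Finsupp.single_apply]

lemma hom2 {Q : MvPolynomial (Fin 2) ℂ} (hQ : Q.IsHomogeneous 2) :
    Q = monomial (Finsupp.single 0 2) (coeff (Finsupp.single 0 2) Q)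
      + monomial (Finsupp.single 0 1 + Finsupp.single 1 1)
          (coeff (Finsupp.single 0 1 + Finsupp.single 1 1) Q)
      + monomial (Finsupp.single 1 2) (coeff (Finsupp.single 1 2) Q) := by
  ext d
  rw [coeff_add, coeff_add, coeff_monomial, coeff_monomial, coeff_monomial]
  by_cases h : d 0 + d 1 = 2
  · have hd := fin2_eq d
    have : d 0 = 0 ∧ d 1 = 2 ∨ d 0 = 1 ∧ d 1 = 1 ∨ d 0 = 2 ∧ d 1 = 0 := by omega
    rcases this with ⟨h0, h1⟩ | ⟨h0, h1⟩ | ⟨h0, h1⟩ <;>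
      rw [h0, h1] at hd <;>
      (try simp only [Finsupp.single_zero, zero_add, add_zero] at hd) <;>
      subst hd <;>
      simp [Finsupp.ext_iff, Fin.forall_fin_two, Finsupp.single_apply, Finsupp.add_apply]
  · have hz : coeff d Q = 0 := hQ.coeff_eq_zero (by rw [fin2_deg]; omega)
    rw [hz]
    split_ifs <;>
      first
      | (subst_vars; exact absurd (by simp [Finsupp.single_apply, Finsupp.add_apply]) h)
      | simp

lemma hom1 {L : MvPolynomial (Fin 2) ℂ} (hL : L.IsHomogeneous 1) :
    L = monomial (Finsupp.single 0 1) (coeff (Finsupp.single 0 1) L)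
      + monomial (Finsupp.single 1 1) (coeff (Finsupp.single 1 1) L) := by
  ext d
  rw [coeff_add, coeff_monomial, coeff_monomial]
  by_cases h : d 0 + d 1 = 1
  · have hd := fin2_eq d
    have : d 0 = 0 ∧ d 1 = 1 ∨ d 0 = 1 ∧ d 1 = 0 := by omega
    rcases this with ⟨h0, h1⟩ | ⟨h0, h1⟩ <;>
      rw [h0, h1] at hd <;>
      (try simp only [Finsupp.single_zero, zero_add, add_zero] at hd) <;>
      subst hd <;>
      simp [Finsupp.ext_iff, Fin.forall_fin_two, Finsupp.single_apply, Finsupp.add_apply]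
  · have hz : coeff d L = 0 := hL.coeff_eq_zero (by rw [fin2_deg]; omega)
    rw [hz]
    split_ifs <;>
      first
      | (subst_vars; exact absurd (by simp [Finsupp.single_apply, Finsupp.add_apply]) h)
      | simp

lemma mono_sq (i : Fin 2) (v : ℂ) :
    (monomial (Finsupp.single i 2) v : MvPolynomial (Fin 2) ℂ) = C v * X i ^ 2 := by
  rw [X_pow_eq_monomial, C_mul_monomial, mul_one]

lemma mono_lin (i : Fin 2) (v : ℂ) :
    (monomial (Finsupp.single i 1) v : MvPolynomial (Fin 2) ℂ) = C v * X i := by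
  rw [← pow_one (X i : MvPolynomial (Fin 2) ℂ), X_pow_eq_monomial, C_mul_monomial, mul_one]

lemma mono_mixed (v : ℂ) :
    (monomial (Finsupp.single 0 1 + Finsupp.single 1 1) v : MvPolynomial (Fin 2) ℂ)
      = C v * (X 0 * X 1) := by
  rw [show (X 0 * X 1 : MvPolynomial (Fin 2) ℂ)
        = monomial (Finsupp.single 0 1 + Finsupp.single 1 1) ((1 : ℂ) * 1) by
      rw [← monomial_mul]; rfl,
    C_mul_monomial, one_mul, mul_one]

lemma transv_comp (Q L : MvPolynomial (Fin 2) ℂ) (a b c p q : ℂ)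
    (hQrep : Q = C a * X 0 ^ 2 + C b * (X 0 * X 1) + C c * X 1 ^ 2)
    (hLrep : L = C p * X 0 + C q * X 1) :
    (2:ℂ) • transv 2 1 1 Q L = C (2*a*q - b*p) * X 0 + C (b*q - 2*c*p) * X 1 := by
  rw [transv, smul_smul, Finset.sum_range_succ, Finset.sum_range_one]
  norm_num [Nat.factorial]
  simp [pd, hQrep, hLrep, pderiv_mul, pderiv_pow, pderiv_X_self,
    pderiv_X_of_ne, pderiv_C_mul, map_mul, map_sub, map_add, map_ofNat]
  ring

/-- if `Q` is a binary quadratic form and `ℓ` a nonzero linear form,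
then `Q`, `ℓ²` and `((Q,ℓ)₁)²` are linearly dependent over `ℂ`. -/
theorem stmt0 (Q L : MvPolynomial (Fin 2) ℂ) (hQ : Q.IsHomogeneous 2)
    (hL : L.IsHomogeneous 1) (hL0 : L ≠ 0) :
    ∃ a b c : ℂ, ¬(a = 0 ∧ b = 0 ∧ c = 0) ∧
      a • Q + b • L ^ 2 + c • (transv 2 1 1 Q L) ^ 2 = 0 := by
  set a := coeff (Finsupp.single 0 2) Q with ha
  set b := coeff (Finsupp.single 0 1 + Finsupp.single 1 1) Q with hb
  set c := coeff (Finsupp.single 1 2) Q with hc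
  set p := coeff (Finsupp.single 0 1) L with hp
  set q := coeff (Finsupp.single 1 1) L with hq
  have hQrep : Q = C a * X 0 ^ 2 + C b * (X 0 * X 1) + C c * X 1 ^ 2 := by
    conv_lhs => rw [hom2 hQ]
    rw [mono_sq, mono_sq, mono_mixed]
  have hLrep : L = C p * X 0 + C q * X 1 := by
    conv_lhs => rw [hom1 hL]
    rw [mono_lin, mono_lin]
  have hT := transv_comp Q L a b c p q hQrep hLrep
  refine ⟨4 * (a * q ^ 2 - b * p * q + c * p ^ 2), b ^ 2 - 4 * a * c, -4, ?_, ?_⟩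
  · rintro ⟨-, -, h⟩
    norm_num at h
  · have h4 : (-4 : ℂ) • (transv 2 1 1 Q L) ^ 2
        = (-1 : ℂ) • ((2 : ℂ) • transv 2 1 1 Q L) ^ 2 := by
      rw [smul_pow, smul_smul]
      norm_num
    rw [h4, hT, hQrep, hLrep]
    simp only [smul_eq_C_mul, map_mul, map_add, map_sub, map_pow, map_neg, map_one, map_ofNat]
    ring
end

section
/- Let Q be a binary quadratic form. For every linear form ℓ in x₁, x₂ one has (Q,(Q,ℓ)₁)₁ = (1/4)·Δ_Q·ℓ. Consequently, if F = ∏_{i=1}^{d} ℓ_i is a product of d linear forms, then 4^d · ∏_{i=1}^{d} (Q,(Q,ℓ_i)₁)₁ = Δ_Q^d · F; that is, the map σ_Q defined on products of linear forms by σ_Q(∏ ℓ_i) = 2^d ∏ (Q,ℓ_i)₁ satisfies σ_Q(σ_Q(F)) = Δ_Q^d · F. -/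
open MvPolynomial Finset

/-- The binary quadratic form `Q = q₀x₁² + 2q₁x₁x₂ + q₂x₂²`. -/
noncomputable def quadF (q0 q1 q2 : ℂ) : MvPolynomial (Fin 2) ℂ :=
  C q0 * X 0 ^ 2 + C (2 * q1) * (X 0 * X 1) + C q2 * X 1 ^ 2


lemma decomp1 (L : MvPolynomial (Fin 2) ℂ) (h : L.IsHomogeneous 1) :
    L = C (L.coeff (Finsupp.single 0 1)) * X 0 + C (L.coeff (Finsupp.single 1 1)) * X 1 := by
  ext m
  simp only [coeff_add, coeff_C_mul, coeff_X', mul_ite, mul_one, mul_zero]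
  by_cases h0 : m = Finsupp.single 0 1
  · subst h0
    simp [Finsupp.single_eq_single_iff]
  · by_cases h1 : m = Finsupp.single 1 1
    · subst h1
      simp [Finsupp.single_eq_single_iff]
    · rw [if_neg (fun he => h0 he.symm), if_neg (fun he => h1 he.symm), add_zero]
      apply h.coeff_eq_zero
      intro hd
      have h2 : m 0 + m 1 = 1 := by
        have hs : ∑ i ∈ m.support, m i = ∑ i : Fin 2, m i :=
          Finset.sum_subset (Finset.subset_univ _)
            (fun i _ hi => Finsupp.notMem_support_iff.mp hi)
        have hd' := hd
        rw [Finsupp.degree_apply, hs, Fin.sum_univ_two] at hd'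
        exact hd'
      have ha : (m 0 = 1 ∧ m 1 = 0) ∨ (m 0 = 0 ∧ m 1 = 1) := by omega
      rcases ha with ⟨ha0, ha1⟩ | ⟨ha0, ha1⟩
      · exact h0 (Finsupp.ext fun i => by fin_cases i <;> simp [ha0, ha1])
      · exact h1 (Finsupp.ext fun i => by fin_cases i <;> simp [ha0, ha1])

lemma transv_lin (q0 q1 q2 a b : ℂ) :
    transv 2 1 1 (quadF q0 q1 q2) (C a * X 0 + C b * X 1) =
      C (q0*b - q1*a) * X 0 + C (q1*b - q2*a) * X 1 := by
  simp only [transv, quadF, pd, sum_range_succ, sum_range_zero, Nat.factorial]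
  simp only [Function.iterate_one, Function.iterate_zero, id_eq]
  simp [pderiv_X, pderiv_mul, pderiv_C, pderiv_pow]
  apply smul_right_injective (MvPolynomial (Fin 2) ℂ) (two_ne_zero (α := ℂ))
  simp only [smul_smul, smul_add, smul_sub, smul_neg]
  norm_num
  simp only [smul_eq_C_mul, map_ofNat]
  ring

/-- `(Q,(Q,ℓ)₁)₁ = (1/4)Δ_Q ℓ` for every linear form `ℓ`, and consequently
for `F = ∏ ℓᵢ` one has `4^d ∏ (Q,(Q,ℓᵢ)₁)₁ = Δ_Q^d F`. -/
theorem stmt1 (q0 q1 q2 : ℂ) :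
    (∀ L : MvPolynomial (Fin 2) ℂ, L.IsHomogeneous 1 →
      transv 2 1 1 (quadF q0 q1 q2) (transv 2 1 1 (quadF q0 q1 q2) L) =
        ((4 * (q1 ^ 2 - q0 * q2)) / 4) • L) ∧
    (∀ d : ℕ, ∀ L : Fin d → MvPolynomial (Fin 2) ℂ, (∀ i, (L i).IsHomogeneous 1) →
      (4 : ℂ) ^ d •
          ∏ i, transv 2 1 1 (quadF q0 q1 q2) (transv 2 1 1 (quadF q0 q1 q2) (L i)) =
        (4 * (q1 ^ 2 - q0 * q2)) ^ d • ∏ i, L i) := by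
  have key : ∀ L : MvPolynomial (Fin 2) ℂ, L.IsHomogeneous 1 →
      transv 2 1 1 (quadF q0 q1 q2) (transv 2 1 1 (quadF q0 q1 q2) L) =
        ((4 * (q1 ^ 2 - q0 * q2)) / 4) • L := by
    intro L hL
    rw [decomp1 L hL, transv_lin, transv_lin,
      show (4 * (q1 ^ 2 - q0 * q2)) / 4 = q1 ^ 2 - q0 * q2 by ring]
    rw [smul_eq_C_mul]
    simp only [map_sub, map_mul, map_pow]
    ring
  refine ⟨key, fun d L hL => ?_⟩
  have e : ∀ i ∈ Finset.univ (α := Fin d),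
      transv 2 1 1 (quadF q0 q1 q2) (transv 2 1 1 (quadF q0 q1 q2) (L i)) =
        ((4 * (q1 ^ 2 - q0 * q2)) / 4) • L i := fun i _ => key (L i) (hL i)
  rw [Finset.prod_congr rfl e]
  simp only [smul_eq_C_mul, Finset.prod_mul_distrib, Finset.prod_const, Finset.card_univ,
    Fintype.card_fin]
  rw [← C_pow, ← mul_assoc, ← C_mul, ← mul_pow,
    show (4 : ℂ) * ((4 * (q1 ^ 2 - q0 * q2)) / 4) = 4 * (q1 ^ 2 - q0 * q2) by ring]
end

section
/- Fix d ≥ 1 and set n = ⌊d/2⌋. For every integer 0 ≤ i ≤ n, the coefficient α_{i,i}^{(0)} = ω(d−2i, d−2i; d−2i, d−2i; 0) is a strictly positive rational number. -/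
open MvPolynomial Finset

/-- `rfac k` is `1/k!` for `k ≥ 0` and `0` for `k < 0` (indicator of nonnegativity of a
factorial argument appearing in a denominator). -/
noncomputable def rfac (k : ℤ) : ℂ := if 0 ≤ k then (1 : ℂ) / (k.toNat.factorial : ℂ) else 0

noncomputable def P1 (d a b r s : ℕ) : ℂ :=
  ((a.factorial : ℂ) * (b.factorial : ℂ) * (r.factorial : ℂ) * (s.factorial : ℂ) *
      ((d - r).factorial : ℂ) * ((2 * b - r).factorial : ℂ) * ((2 * a - s).factorial : ℂ) *
      ((2 * b + d - 2 * r - s).factorial : ℂ)) /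
    (((2 * a).factorial : ℂ) * ((2 * b).factorial : ℂ) * ((2 * b + d - 2 * r).factorial : ℂ))

noncomputable def P2 (d a b r s t : ℕ) : ℂ :=
  (((2 * t + 1).factorial : ℂ) * (((a + b + t) / 2).factorial : ℂ) *
      ((a + b - t).factorial : ℂ) * ((a + t - b).factorial : ℂ) * ((b + t - a).factorial : ℂ)) /
    ((t.factorial : ℂ) * ((a + b + t + 1).factorial : ℂ) *
      ((a + b + d - r - s + t + 1).factorial : ℂ) * (((a + b - t) / 2).factorial : ℂ) *
      (((a + t - b) / 2).factorial : ℂ) * (((b + t - a) / 2).factorial : ℂ))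

noncomputable def P3 (d a b r s t : ℕ) : ℂ :=
  ∑ z ∈ range (a + b + d + t + 2),
    (-1 : ℂ) ^ z * ((z + 1).factorial : ℂ) *
      rfac ((z : ℤ) - a - b - t) * rfac ((z : ℤ) - 2 * b - d + r) *
      rfac ((z : ℤ) - 2 * a - 2 * b - d + 2 * r + s) *
      rfac ((z : ℤ) - a - b - d + r + s - t) * rfac ((a : ℤ) + b + d - r + t - z) *
      rfac (2 * (a : ℤ) + 2 * b + d - r - s - z) *
      rfac ((a : ℤ) + 3 * b + d - 2 * r - s + t - z)

/-- The coefficient `ω(a,b;r,s;t)` (for binary `d`-ics). -/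
noncomputable def omegaC (d a b r s t : ℕ) : ℂ :=
  (-1 : ℂ) ^ (d + r + s + (a + b - t) / 2) * P1 d a b r s * P2 d a b r s t * P3 d a b r s t

lemma rfac_neg {k : ℤ} (h : k < 0) : rfac k = 0 := by simp [rfac, not_le.2 h]

lemma rfac_natCast (k : ℕ) : rfac (k : ℤ) = 1 / (k.factorial : ℂ) := by simp [rfac]

lemma P3val (d m : ℕ) (h : m ≤ d) :
    P3 d m m m m 0 = (-1:ℂ)^(m+d) * ((m+d+1).factorial : ℂ) /
      (((d-m).factorial : ℂ) * (m.factorial : ℂ) * (m.factorial : ℂ)) := by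
  rw [P3, Finset.sum_eq_single_of_mem (m+d) (by simp; omega)]
  · rw [show ((↑(m+d):ℤ) - ↑m - ↑m - ((0:ℕ):ℤ)) = ((d-m : ℕ):ℤ) from by omega,
      show ((↑(m+d):ℤ) - 2*↑m - ↑d + ↑m) = ((0:ℕ):ℤ) from by omega,
      show ((↑(m+d):ℤ) - 2*↑m - 2*↑m - ↑d + 2*↑m + ↑m) = ((0:ℕ):ℤ) from by omega,
      show ((↑(m+d):ℤ) - ↑m - ↑m - ↑d + ↑m + ↑m - ((0:ℕ):ℤ)) = ((m:ℕ):ℤ) from by omega,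
      show ((m:ℤ) + ↑m + ↑d - ↑m + ((0:ℕ):ℤ) - ↑(m+d)) = ((0:ℕ):ℤ) from by omega,
      show (2*(m:ℤ) + 2*↑m + ↑d - ↑m - ↑m - ↑(m+d)) = ((m:ℕ):ℤ) from by omega,
      show ((m:ℤ) + 3*↑m + ↑d - 2*↑m - ↑m + ((0:ℕ):ℤ) - ↑(m+d)) = ((0:ℕ):ℤ) from by omega]
    simp only [rfac_natCast]
    simp [Nat.factorial]
    ring
  · intro z hz hne
    rcases Ne.lt_or_gt hne with hlt | hgt
    · have h2 : rfac ((z:ℤ) - 2*(m:ℤ) - (d:ℤ) + (m:ℤ)) = 0 := rfac_neg (by omega)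
      rw [h2]; ring
    · have h2 : rfac ((m:ℤ) + (m:ℤ) + (d:ℤ) - (m:ℤ) + ((0:ℕ):ℤ) - (z:ℤ)) = 0 := rfac_neg (by omega)
      rw [h2]; ring

lemma omegaVal (d m : ℕ) (h : m ≤ d) :
    omegaC d m m m m 0 = P1 d m m m m * P2 d m m m m 0 *
      (((m+d+1).factorial : ℂ) /
        (((d-m).factorial : ℂ) * (m.factorial : ℂ) * (m.factorial : ℂ))) := by
  rw [omegaC, P3val d m h, show (m + m - 0)/2 = m from by omega]
  have hs : (-1:ℂ)^(d+m+m+m) * (-1:ℂ)^(m+d) = 1 := by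
    rw [← pow_add, show d+m+m+m+(m+d) = 2*(d+2*m) from by ring, pow_mul]
    norm_num
  calc (-1:ℂ)^(d+m+m+m) * P1 d m m m m * P2 d m m m m 0 *
        ((-1:ℂ)^(m+d) * ((m+d+1).factorial : ℂ) /
          (((d-m).factorial : ℂ) * (m.factorial : ℂ) * (m.factorial : ℂ)))
      = ((-1:ℂ)^(d+m+m+m) * (-1:ℂ)^(m+d)) * (P1 d m m m m * P2 d m m m m 0 *
        (((m+d+1).factorial : ℂ) /
          (((d-m).factorial : ℂ) * (m.factorial : ℂ) * (m.factorial : ℂ)))) := by ring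
    _ = _ := by rw [hs, one_mul]

/-- the coefficient `α_{i,i}^{(0)} = ω(d−2i, d−2i; d−2i, d−2i; 0)` is a
strictly positive rational number, for every `0 ≤ i ≤ ⌊d/2⌋`. -/
theorem stmt12 (d : ℕ) (hd : 1 ≤ d) (i : ℕ) (hi : i ≤ d / 2) :
    ∃ q : ℚ, 0 < q ∧
      omegaC d (d - 2 * i) (d - 2 * i) (d - 2 * i) (d - 2 * i) 0 = (q : ℂ) := by
  set m := d - 2 * i with hm
  have hmd : m ≤ d := Nat.sub_le _ _
  have hfq : ∀ k : ℕ, (0:ℚ) < (k.factorial : ℚ) := fun k => by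
    exact_mod_cast k.factorial_pos
  have hfc : ∀ k : ℕ, ((k.factorial : ℂ)) ≠ 0 := fun k =>
    Nat.cast_ne_zero.2 k.factorial_ne_zero
  refine ⟨((m.factorial : ℚ)^6 * ((d-m).factorial : ℚ)^2 * (m.factorial : ℚ) *
      ((2*m).factorial : ℚ) * ((m+d+1).factorial : ℚ)) /
      (((2*m).factorial : ℚ)^2 * (d.factorial : ℚ) * ((2*m+1).factorial : ℚ) *
      ((d+1).factorial : ℚ) * (m.factorial : ℚ) * ((d-m).factorial : ℚ) *
      (m.factorial : ℚ)^2), ?_, ?_⟩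
  · apply div_pos
    · have := hfq m; have := hfq (d-m); have := hfq (2*m); have := hfq (m+d+1)
      positivity
    · have := hfq m; have := hfq (d-m); have := hfq (2*m); have := hfq (2*m+1)
      have := hfq d; have := hfq (d+1)
      positivity
  · rw [omegaVal d m hmd, P1, P2,
      show 2*m - m = m from by omega,
      show 2*m + d - 2*m - m = d - m from by omega,
      show 2*m + d - 2*m = d from by omega,
      show (m + m + 0)/2 = m from by omega,
      show m + m - 0 = 2*m from by omega,
      show m + 0 - m = 0 from by omega,
      show m + m + d - m - m + 0 + 1 = d + 1 from by omega,
      show m + m + 0 + 1 = 2*m + 1 from by omega,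
      show 2*m/2 = m from by omega,
      show (0:ℕ)/2 = 0 from by omega,
      show 2*0 + 1 = 1 from by omega]
    push_cast
    field_simp
    ring
end

section
/- Fix d ≥ 1 and set n = ⌊d/2⌋. Work in the polynomial ring ℂ[q₀,q₁,q₂,x₁,x₂,y₁,y₂]. Let Δ = 4(q₁² − q₀q₂) and let Q_{xy} = q₀x₁y₁ + q₁(x₁y₂ + x₂y₁) + q₂x₂y₂ (the first polar of the quadratic Q = q₀x₁² + 2q₁x₁x₂ + q₂x₂²). If complex numbers λ₀,…,λ_n satisfy Σ_{i=0}^{n} λ_i · Δ^i · (x₁y₂ − x₂y₁)^{2i} · Q_{xy}^{d−2i} = 0 as a polynomial identity, then λ₀ = λ₁ = ⋯ = λ_n = 0. -/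
open MvPolynomial Finset

/-- in `ℂ[q₀,q₁,q₂,x₁,x₂,y₁,y₂]` (variables `X 0,…,X 6` in that order), with
`Δ = 4(q₁²−q₀q₂)`, the polynomials `Δ^i (x₁y₂−x₂y₁)^{2i} Q_{xy}^{d−2i}`, `0 ≤ i ≤ ⌊d/2⌋`,
are linearly independent, where `Q_{xy} = q₀x₁y₁ + q₁(x₁y₂+x₂y₁) + q₂x₂y₂`. -/
theorem stmt15 (d : ℕ) (hd : 1 ≤ d) (lam : ℕ → ℂ)
    (h : ∑ i ∈ range (d / 2 + 1),
        lam i •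
          ((4 * ((X 1 : MvPolynomial (Fin 7) ℂ) ^ 2 - X 0 * X 2)) ^ i *
            (X 3 * X 6 - X 4 * X 5) ^ (2 * i) *
            (X 0 * (X 3 * X 5) + X 1 * (X 3 * X 6 + X 4 * X 5) + X 2 * (X 4 * X 6)) ^
              (d - 2 * i)) = 0) :
    ∀ i ≤ d / 2, lam i = 0 := by
  intro i hi
  have h2 := congrArg (aeval (fun j : Fin 7 =>
    if j = 2 then 1 - Polynomial.X else if j = 4 then 0 else if j = 5 then (0 : Polynomial ℂ) else 1)) h
  simp only [map_sum, map_smul, map_mul, map_pow, map_sub, map_add, map_ofNat, aeval_X,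
    if_true, if_false, reduceIte, Fin.isValue, Fin.reduceEq,
    map_zero, one_pow, mul_one, mul_zero, zero_mul, add_zero, zero_add, one_mul,
    sub_sub_cancel, sub_zero] at h2
  have h3 := congrArg (fun p => Polynomial.coeff p i) h2
  simp only [Polynomial.finset_sum_coeff, Polynomial.coeff_smul, mul_pow,
    Polynomial.coeff_zero] at h3
  have key : ∀ x : ℕ, ((4 : Polynomial ℂ) ^ x * Polynomial.X ^ x).coeff i
      = 4 ^ x * (if i = x then 1 else 0) := by
    intro x
    rw [show ((4 : Polynomial ℂ)) = Polynomial.C 4 from (map_ofNat (Polynomial.C : ℂ →+* Polynomial ℂ) 4).symm, ← map_pow,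
      Polynomial.coeff_C_mul, Polynomial.coeff_X_pow]
  simp only [key, smul_eq_mul, mul_ite, mul_one, mul_zero, Finset.sum_ite_eq,
    Finset.mem_range] at h3
  rw [if_pos (Nat.lt_succ_of_le hi)] at h3
  have h4 : (4 : ℂ) ^ i ≠ 0 := pow_ne_zero _ (by norm_num)
  rcases mul_eq_zero.1 h3 with h5 | h5
  · exact h5
  · exact absurd h5 h4
end

section
/- Fix d ≥ 1 and set n = ⌊d/2⌋. If complex numbers μ₀,…,μ_n satisfy Σ_{i=0}^{n} μ_i · Δ_Q^{d−i} · (Q^{2i}, F)_{2i} = 0 for every binary quadratic Q and every binary form F of order d, then μ₀ = μ₁ = ⋯ = μ_n = 0. (Here (Q^{0},F)_{0} = F.) -/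
open MvPolynomial Finset

lemma pd_smul (i : Fin 2) (k : ℕ) (c : ℂ) (p : MvPolynomial (Fin 2) ℂ) :
    pd i k (c • p) = c • pd i k p := by
  induction k generalizing p with
  | zero => rfl
  | succ k ih =>
    simp only [pd, Function.iterate_succ_apply] at *
    rw [Derivation.map_smul, ih]

lemma desc_succ' (a k : ℕ) : a.descFactorial (k+1) = a * (a-1).descFactorial k := by
  cases a with
  | zero => simp [Nat.zero_descFactorial_succ]
  | succ a => simpa using Nat.succ_descFactorial_succ a k

lemma cast_descFactorial (m k : ℕ) :
    ((m.descFactorial k : ℕ) : ℂ) = ∏ t ∈ range k, ((m : ℂ) - t) := by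
  induction k with
  | zero => simp
  | succ k ih =>
    rcases lt_or_ge k m with hk | hk
    · rw [Nat.descFactorial_succ, prod_range_succ, Nat.cast_mul, Nat.cast_sub hk.le, ih]
      ring
    · rw [Nat.descFactorial_of_lt (Nat.lt_succ_of_le hk)]
      symm
      rw [Nat.cast_zero]
      apply Finset.prod_eq_zero (mem_range.2 (Nat.lt_succ_of_le hk))
      simp

lemma pd0_pow (k a b : ℕ) :
    pd 0 k (X 0 ^ a * X 1 ^ b : MvPolynomial (Fin 2) ℂ)
      = (a.descFactorial k : ℂ) • (X 0 ^ (a - k) * X 1 ^ b) := by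
  induction k generalizing a with
  | zero => simp [pd]
  | succ k ih =>
    rw [show pd 0 (k+1) (X 0 ^ a * X 1 ^ b : MvPolynomial (Fin 2) ℂ)
        = pd 0 k (pderiv 0 (X 0 ^ a * X 1 ^ b)) from Function.iterate_succ_apply _ _ _]
    have hder : pderiv (0 : Fin 2) (X 0 ^ a * X 1 ^ b : MvPolynomial (Fin 2) ℂ)
        = ((a : ℂ)) • (X 0 ^ (a - 1) * X 1 ^ b) := by
      rw [pderiv_mul, pderiv_pow, pderiv_pow, pderiv_X_self,
        pderiv_X_of_ne (show (1:Fin 2) ≠ 0 by decide)]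
      rw [smul_eq_C_mul, C_eq_coe_nat]
      ring
    rw [hder, pd_smul, ih, smul_smul, ← Nat.cast_mul, ← desc_succ', Nat.sub_sub, Nat.add_comm 1 k]

lemma pd1_pow (k a b : ℕ) :
    pd 1 k (X 0 ^ a * X 1 ^ b : MvPolynomial (Fin 2) ℂ)
      = (b.descFactorial k : ℂ) • (X 0 ^ a * X 1 ^ (b - k)) := by
  induction k generalizing b with
  | zero => simp [pd]
  | succ k ih =>
    rw [show pd 1 (k+1) (X 0 ^ a * X 1 ^ b : MvPolynomial (Fin 2) ℂ)
        = pd 1 k (pderiv 1 (X 0 ^ a * X 1 ^ b)) from Function.iterate_succ_apply _ _ _]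
    have hder : pderiv (1 : Fin 2) (X 0 ^ a * X 1 ^ b : MvPolynomial (Fin 2) ℂ)
        = ((b : ℂ)) • (X 0 ^ a * X 1 ^ (b - 1)) := by
      rw [pderiv_mul, pderiv_pow, pderiv_pow, pderiv_X_self,
        pderiv_X_of_ne (show (0:Fin 2) ≠ 1 by decide)]
      rw [smul_eq_C_mul, C_eq_coe_nat]
      ring
    rw [hder, pd_smul, ih, smul_smul, ← Nat.cast_mul, ← desc_succ', Nat.sub_sub, Nat.add_comm 1 k]

lemma transv_monomial (d i a b : ℕ) :
    transv (4*i) d (2*i) ((X 0 * X 1 : MvPolynomial (Fin 2) ℂ)^(2*i)) (X 0 ^ a * X 1 ^ b)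
    = ((((2*i).factorial * (d - 2*i).factorial : ℕ) : ℂ) /
        (((4*i).factorial * d.factorial : ℕ) : ℂ)) •
      ((∑ j ∈ range (2*i + 1),
         (-1:ℂ)^j * ((2*i).choose j) * ((2*i).descFactorial j) * ((2*i).descFactorial (2*i - j))
           * (a.descFactorial j) * (b.descFactorial (2*i - j))) • (X 0 ^ a * X 1 ^ b)) := by
  rw [transv, show 4*i - 2*i = 2*i by omega, Finset.sum_smul]
  congr 1
  refine Finset.sum_congr rfl fun j hj => ?_
  have hj' : j ≤ 2*i := Nat.lt_succ_iff.mp (mem_range.mp hj)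
  simp only [mul_pow, pd0_pow, pd1_pow, pd_smul]
  rw [Nat.sub_sub_self hj']
  by_cases hja : j ≤ a
  · by_cases hjb : 2*i - j ≤ b
    · have hx0 : (X 0 : MvPolynomial (Fin 2) ℂ)^j * X 0^(a-j) = X 0^a := by
        rw [← pow_add, Nat.add_sub_cancel' hja]
      have hx1 : (X 1 : MvPolynomial (Fin 2) ℂ)^(2*i-j) * X 1^(b-(2*i-j)) = X 1^b := by
        rw [← pow_add, Nat.add_sub_cancel' hjb]
      simp only [smul_eq_C_mul]
      rw [← hx0, ← hx1]
      simp only [map_mul, map_pow, map_neg, map_one, map_natCast]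
      ring
    · rw [Nat.descFactorial_of_lt (lt_of_not_ge hjb)]
      simp
  · rw [Nat.descFactorial_of_lt (lt_of_not_ge hja)]
    simp

lemma neg_one_pow_sub_eq (i j : ℕ) (h : j ≤ 2*i) : ((-1:ℂ))^(2*i - j) = (-1)^j := by
  have h1 : ((-1:ℂ))^(2*i-j) * (-1)^j = 1 := by
    rw [← pow_add, Nat.sub_add_cancel h, pow_mul]; norm_num
  have h2 : ((-1:ℂ))^j * (-1)^j = 1 := by
    rw [← pow_add, ← two_mul, pow_mul]; norm_num
  exact mul_right_cancel₀ (pow_ne_zero _ (by norm_num)) (h1.trans h2.symm)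

noncomputable def TT (d i j : ℕ) : Polynomial ℂ :=
  (∏ t ∈ range j, (Polynomial.X - Polynomial.C (t:ℂ)))
    * (∏ t ∈ range (2*i - j), (Polynomial.X - Polynomial.C ((d:ℂ) - t)))

lemma TT_monic (d i j : ℕ) : (TT d i j).Monic :=
  (Polynomial.monic_prod_of_monic _ _ fun t _ => Polynomial.monic_X_sub_C _).mul
    (Polynomial.monic_prod_of_monic _ _ fun t _ => Polynomial.monic_X_sub_C _)

lemma TT_natDegree (d i j : ℕ) (h : j ≤ 2*i) : (TT d i j).natDegree = 2*i := by
  rw [TT, Polynomial.Monic.natDegree_mul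
      (Polynomial.monic_prod_of_monic _ _ fun t _ => Polynomial.monic_X_sub_C _)
      (Polynomial.monic_prod_of_monic _ _ fun t _ => Polynomial.monic_X_sub_C _),
    Polynomial.natDegree_prod_of_monic _ _ (fun t _ => Polynomial.monic_X_sub_C _),
    Polynomial.natDegree_prod_of_monic _ _ (fun t _ => Polynomial.monic_X_sub_C _)]
  simp only [Polynomial.natDegree_X_sub_C, Finset.sum_const, card_range, smul_eq_mul, mul_one]
  omega

noncomputable def Lam (d i : ℕ) : Polynomial ℂ :=
  ∑ j ∈ range (2*i+1),
    Polynomial.C ((((2*i).choose j) * ((2*i).descFactorial j) * ((2*i).descFactorial (2*i-j)) : ℕ) : ℂ)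
      * TT d i j

lemma Lam_natDegree (d i : ℕ) : (Lam d i).natDegree ≤ 2*i := by
  refine Polynomial.natDegree_sum_le_of_forall_le _ _ fun j hj => ?_
  refine le_trans (Polynomial.natDegree_mul_le) ?_
  rw [Polynomial.natDegree_C, TT_natDegree d i j (Nat.lt_succ_iff.mp (mem_range.mp hj))]
  omega

lemma Lam_coeff (d i : ℕ) : (Lam d i).coeff (2*i)
    = ((∑ j ∈ range (2*i+1),
        ((2*i).choose j) * ((2*i).descFactorial j) * ((2*i).descFactorial (2*i-j)) : ℕ) : ℂ) := by
  rw [Lam, Polynomial.finset_sum_coeff]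
  push_cast
  refine Finset.sum_congr rfl fun j hj => ?_
  rw [Polynomial.coeff_C_mul, ← TT_natDegree d i j (Nat.lt_succ_iff.mp (mem_range.mp hj)),
    (TT_monic d i j).coeff_natDegree, mul_one]

lemma Lam_coeff_ne (d i : ℕ) : (Lam d i).coeff (2*i) ≠ 0 := by
  rw [Lam_coeff]
  have : 0 < ∑ j ∈ range (2*i+1),
      ((2*i).choose j) * ((2*i).descFactorial j) * ((2*i).descFactorial (2*i-j)) := by
    refine Finset.sum_pos' (fun j _ => Nat.zero_le _) ⟨0, mem_range.mpr (Nat.succ_pos _), ?_⟩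
    simp [Nat.descFactorial_self, Nat.factorial_pos]
  exact_mod_cast this.ne'

lemma Lam_eval (d i a : ℕ) (ha : a ≤ d) :
    (Lam d i).eval (a:ℂ)
      = ∑ j ∈ range (2*i+1),
          (-1:ℂ)^j * ((2*i).choose j) * ((2*i).descFactorial j) * ((2*i).descFactorial (2*i-j))
            * (a.descFactorial j) * ((d-a).descFactorial (2*i-j)) := by
  rw [Lam, Polynomial.eval_finset_sum]
  refine Finset.sum_congr rfl fun j hj => ?_
  have hj' : j ≤ 2*i := Nat.lt_succ_iff.mp (mem_range.mp hj)
  rw [Polynomial.eval_mul, Polynomial.eval_C, TT, Polynomial.eval_mul,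
    Polynomial.eval_prod, Polynomial.eval_prod]
  simp only [Polynomial.eval_sub, Polynomial.eval_X, Polynomial.eval_C]
  have hp1 : ∏ t ∈ range j, ((a:ℂ) - t) = (a.descFactorial j : ℂ) :=
    (cast_descFactorial a j).symm
  have hp2 : ∏ t ∈ range (2*i-j), ((a:ℂ) - ((d:ℂ) - t))
      = (-1:ℂ)^(2*i-j) * ((d-a).descFactorial (2*i-j) : ℂ) := by
    rw [cast_descFactorial, Nat.cast_sub ha]
    rw [show ∏ t ∈ range (2*i-j), ((a:ℂ) - ((d:ℂ) - t))
        = ∏ t ∈ range (2*i-j), -(((d:ℂ) - (a:ℂ)) - t) from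
      Finset.prod_congr rfl fun t _ => by ring]
    rw [show ∏ t ∈ range (2*i-j), -(((d:ℂ) - (a:ℂ)) - t)
        = ∏ t ∈ range (2*i-j), ((-1) * (((d:ℂ) - (a:ℂ)) - t)) from
      Finset.prod_congr rfl fun t _ => by ring,
      Finset.prod_mul_distrib, Finset.prod_const, card_range]
  rw [hp1, hp2, neg_one_pow_sub_eq i j hj']
  push_cast
  ring

noncomputable def pref (d i : ℕ) : ℂ :=
  ((((2*i).factorial * (d - 2*i).factorial : ℕ) : ℂ) /
        (((4*i).factorial * d.factorial : ℕ) : ℂ))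

lemma pref_ne (d i : ℕ) : pref d i ≠ 0 := by
  apply div_ne_zero
  · exact_mod_cast Nat.mul_ne_zero (Nat.factorial_ne_zero _) (Nat.factorial_ne_zero _)
  · exact_mod_cast Nat.mul_ne_zero (Nat.factorial_ne_zero _) (Nat.factorial_ne_zero _)

/-- if `Σ_{i=0}^{⌊d/2⌋} μ_i Δ_Q^{d−i} (Q^{2i},F)_{2i} = 0` for every binary
quadratic `Q` and every binary `d`-ic `F`, then all `μ_i` vanish. -/
theorem stmt17 (d : ℕ) (hd : 1 ≤ d) (mu : ℕ → ℂ)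
    (h : ∀ q0 q1 q2 : ℂ, ∀ F : MvPolynomial (Fin 2) ℂ, F.IsHomogeneous d →
      ∑ i ∈ range (d / 2 + 1),
        (mu i * (4 * (q1 ^ 2 - q0 * q2)) ^ (d - i)) •
          transv (4 * i) d (2 * i) ((quadF q0 q1 q2) ^ (2 * i)) F = 0) :
    ∀ i ≤ d / 2, mu i = 0 := by
  have hquad : quadF 0 (1/2 : ℂ) 0 = X 0 * X 1 := by
    rw [quadF, show (2 * (1/2 : ℂ)) = 1 by norm_num]
    simp
  -- key relation
  have key : ∀ a : ℕ, a ≤ d →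
      ∑ i ∈ range (d/2+1), (mu i * pref d i) * (Lam d i).eval (a:ℂ) = 0 := by
    intro a ha
    have hhom : (X 0 ^ a * X 1 ^ (d-a) : MvPolynomial (Fin 2) ℂ).IsHomogeneous d := by
      have := (isHomogeneous_X_pow (R := ℂ) (0 : Fin 2) a).mul
        (isHomogeneous_X_pow (1 : Fin 2) (d-a))
      rwa [Nat.add_sub_cancel' ha] at this
    have H := h 0 (1/2) 0 _ hhom
    rw [hquad] at H
    have hM : (X 0 ^ a * X 1 ^ (d-a) : MvPolynomial (Fin 2) ℂ) ≠ 0 :=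
      mul_ne_zero (pow_ne_zero _ (X_ne_zero _)) (pow_ne_zero _ (X_ne_zero _))
    have hone : (4 * ((1/2:ℂ)^2 - 0 * 0)) = 1 := by norm_num
    have H2 : (∑ i ∈ range (d/2+1), (mu i * pref d i) * (Lam d i).eval (a:ℂ)) •
        (X 0 ^ a * X 1 ^ (d-a) : MvPolynomial (Fin 2) ℂ) = 0 := by
      rw [Finset.sum_smul, ← H]
      refine Finset.sum_congr rfl fun i hi => ?_
      rw [transv_monomial d i a (d-a), hone, one_pow, mul_one, smul_smul, smul_smul,
        Lam_eval d i a ha, pref, mul_assoc]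
    exact (smul_eq_zero.mp H2).resolve_right hM
  -- the polynomial
  set P : Polynomial ℂ := ∑ i ∈ range (d/2+1), Polynomial.C (mu i * pref d i) * Lam d i with hPdef
  have hPdeg : P.natDegree ≤ d := by
    refine Polynomial.natDegree_sum_le_of_forall_le _ _ fun i hi => ?_
    refine le_trans Polynomial.natDegree_mul_le ?_
    rw [Polynomial.natDegree_C]
    have hi' : i ≤ d/2 := Nat.lt_succ_iff.mp (mem_range.mp hi)
    have := Lam_natDegree d i
    omega
  have hP0 : P = 0 := by
    apply Polynomial.eq_zero_of_natDegree_lt_card_of_eval_eq_zero' P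
      ((range (d+1)).image (Nat.cast : ℕ → ℂ))
    · intro x hx
      obtain ⟨a, ha, rfl⟩ := Finset.mem_image.mp hx
      have ha' : a ≤ d := Nat.lt_succ_iff.mp (mem_range.mp ha)
      rw [hPdef]
      rw [Polynomial.eval_finset_sum]
      simp only [Polynomial.eval_mul, Polynomial.eval_C]
      exact key a ha'
    · rw [Finset.card_image_of_injective _ Nat.cast_injective, card_range]
      omega
  have step : ∀ m, m ≤ d/2 → (∀ i, m < i → i ≤ d/2 → mu i = 0) → mu m = 0 := by
    intro m hm hhigh
    have hc : P.coeff (2*m) = 0 := by rw [hP0]; simp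
    rw [hPdef, Polynomial.finset_sum_coeff] at hc
    simp only [Polynomial.coeff_C_mul] at hc
    have hsingle : ∑ i ∈ range (d/2+1), (mu i * pref d i) * (Lam d i).coeff (2*m)
        = (mu m * pref d m) * (Lam d m).coeff (2*m) := by
      refine Finset.sum_eq_single m (fun i hi hne => ?_) (fun hm' => ?_)
      · rcases lt_or_gt_of_ne hne with hlt | hgt
        · rw [Polynomial.coeff_eq_zero_of_natDegree_lt
            (lt_of_le_of_lt (Lam_natDegree d i) (by omega)), mul_zero]
        · rw [hhigh i hgt (Nat.lt_succ_iff.mp (mem_range.mp hi)), zero_mul, zero_mul]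
      · exact absurd (mem_range.mpr (by omega)) hm'
    rw [hsingle] at hc
    rcases mul_eq_zero.mp hc with h1 | h2
    · rcases mul_eq_zero.mp h1 with h3 | h4
      · exact h3
      · exact absurd h4 (pref_ne d m)
    · exact absurd h2 (Lam_coeff_ne d m)
  have aux : ∀ k m, m ≤ d/2 → d/2 - m ≤ k → mu m = 0 := by
    intro k
    induction k with
    | zero => exact fun m hm h0 => step m hm (fun i h1 h2 => absurd h2 (by omega))
    | succ k ih => exact fun m hm hk => step m hm (fun i h1 h2 => ih i h2 (by omega))
  exact fun i hi => aux (d/2) i hi (by omega)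
end

section
/- Let d = 4 and z = (z₀,z₁,z₂) = (−12, 24/7, 3/5). Then for every binary quadratic Q and every binary form F of order 4 one has σ_{Q,z}(F) − Δ_Q²·F = −12·Q²·(Q²,F)₄; explicitly, −12·(Q⁴,F)₄ + (24/7)·Δ_Q·(Q²,F)₂ − (2/5)·Δ_Q²·F = −12·Q²·(Q²,F)₄. -/
open MvPolynomial Finset

/-- `σ_{Q,z}(F) = Σ_{i=0}^{⌊d/2⌋} z_i Δ^i (Q^{d−2i}, F)_{d−2i}`, where `Δ = Δ_Q`. -/
noncomputable def sigmaQ (d : ℕ) (z : ℕ → ℂ) (Q : MvPolynomial (Fin 2) ℂ) (Δ : ℂ)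
    (F : MvPolynomial (Fin 2) ℂ) : MvPolynomial (Fin 2) ℂ :=
  ∑ i ∈ range (d / 2 + 1),
    (z i * Δ ^ i) • transv (2 * (d - 2 * i)) d (d - 2 * i) (Q ^ (d - 2 * i)) F

lemma pd_add (i : Fin 2) (k : ℕ) (p q : MvPolynomial (Fin 2) ℂ) :
    pd i k (p + q) = pd i k p + pd i k q := by
  induction k with
  | zero => rfl
  | succ k ih =>
    simp only [pd, Function.iterate_succ_apply'] at *
    rw [ih, map_add]

lemma pd_zero (i : Fin 2) (k : ℕ) : pd i k (0 : MvPolynomial (Fin 2) ℂ) = 0 := by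
  induction k with
  | zero => rfl
  | succ k ih =>
    simp only [pd, Function.iterate_succ_apply'] at *
    rw [ih, map_zero]

lemma transv_add (m n r : ℕ) (A B B' : MvPolynomial (Fin 2) ℂ) :
    transv m n r A (B + B') = transv m n r A B + transv m n r A B' := by
  simp only [transv, pd_add, mul_add, smul_add, Finset.sum_add_distrib]

lemma transv_smul (m n r : ℕ) (c : ℂ) (A B : MvPolynomial (Fin 2) ℂ) :
    transv m n r A (c • B) = c • transv m n r A B := by
  simp only [transv, pd_smul, mul_smul_comm, smul_smul, Finset.smul_sum]
  exact Finset.sum_congr rfl fun i _ => by congr 1; ring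

lemma transv_zero (m n r : ℕ) (A : MvPolynomial (Fin 2) ℂ) :
    transv m n r A 0 = 0 := by
  simp only [transv, pd_zero, mul_zero, smul_zero, Finset.sum_const_zero]

set_option maxHeartbeats 4000000 in
lemma key (q0 q1 q2 c : ℂ) (a b : ℕ) (hab : a + b = 4) :
    (-12 : ℂ) • transv 8 4 4 ((quadF q0 q1 q2) ^ 4) (C c * (X 0 ^ a * X 1 ^ b)) +
        (24 / 7 * (4 * (q1 ^ 2 - q0 * q2))) • transv 4 4 2 ((quadF q0 q1 q2) ^ 2)
          (C c * (X 0 ^ a * X 1 ^ b)) -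
        (2 / 5 * (4 * (q1 ^ 2 - q0 * q2)) ^ 2) • (C c * (X 0 ^ a * X 1 ^ b)) =
      (-12 : ℂ) • ((quadF q0 q1 q2) ^ 2 * transv 4 4 4 ((quadF q0 q1 q2) ^ 2)
        (C c * (X 0 ^ a * X 1 ^ b))) := by
  have ha : a ≤ 4 := by omega
  interval_cases a <;>
    [ (obtain rfl : b = 4 := by omega); (obtain rfl : b = 3 := by omega);
      (obtain rfl : b = 2 := by omega); (obtain rfl : b = 1 := by omega);
      (obtain rfl : b = 0 := by omega) ] <;>
    (simp only [transv, pd, quadF, Finset.sum_range_succ, Finset.sum_range_zero,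
      Function.iterate_succ_apply', Function.iterate_zero_apply, pow_succ, pow_zero, one_mul,
      map_add, pderiv_mul, pderiv_C, pderiv_X_self, pderiv_X_of_ne (by decide : (1:Fin 2) ≠ 0),
      pderiv_X_of_ne (by decide : (0:Fin 2) ≠ 1)]
     apply MvPolynomial.funext
     intro x
     simp only [map_add, map_sub, map_mul, map_smul, map_pow, map_zero, map_one, eval_C, eval_X,
       smul_eq_mul, map_neg, zero_add, add_zero, mul_zero, zero_mul, mul_one]
     norm_num [Nat.factorial, Nat.choose]
     ring)

/-- the difference of the two sides, as a function of `F`. -/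
noncomputable def Gfun (q0 q1 q2 : ℂ) (F : MvPolynomial (Fin 2) ℂ) : MvPolynomial (Fin 2) ℂ :=
  (-12 : ℂ) • transv 8 4 4 ((quadF q0 q1 q2) ^ 4) F +
      (24 / 7 * (4 * (q1 ^ 2 - q0 * q2))) • transv 4 4 2 ((quadF q0 q1 q2) ^ 2) F -
      (2 / 5 * (4 * (q1 ^ 2 - q0 * q2)) ^ 2) • F -
    (-12 : ℂ) • ((quadF q0 q1 q2) ^ 2 * transv 4 4 4 ((quadF q0 q1 q2) ^ 2) F)

lemma Gfun_zero (q0 q1 q2 : ℂ) : Gfun q0 q1 q2 0 = 0 := by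
  simp [Gfun, transv_zero]

lemma Gfun_add (q0 q1 q2 : ℂ) (p q : MvPolynomial (Fin 2) ℂ) :
    Gfun q0 q1 q2 (p + q) = Gfun q0 q1 q2 p + Gfun q0 q1 q2 q := by
  simp only [Gfun, transv_add, smul_add, mul_add]
  abel

lemma Gfun_monomial (q0 q1 q2 : ℂ) (m : Fin 2 →₀ ℕ) (c : ℂ) (hm : m 0 + m 1 = 4) :
    Gfun q0 q1 q2 (monomial m c) = 0 := by
  have hrep : (monomial m c : MvPolynomial (Fin 2) ℂ) = C c * (X 0 ^ m 0 * X 1 ^ m 1) := by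
    rw [monomial_eq, Finsupp.prod_fintype]
    · rw [Fin.prod_univ_two]
    · intro i; exact pow_zero _
  rw [Gfun, hrep, sub_eq_zero]
  exact key q0 q1 q2 c (m 0) (m 1) hm

lemma eqn2 (q0 q1 q2 : ℂ) (F : MvPolynomial (Fin 2) ℂ) (hF : F.IsHomogeneous 4) :
    (-12 : ℂ) • transv 8 4 4 ((quadF q0 q1 q2) ^ 4) F +
        (24 / 7 * (4 * (q1 ^ 2 - q0 * q2))) • transv 4 4 2 ((quadF q0 q1 q2) ^ 2) F -
        (2 / 5 * (4 * (q1 ^ 2 - q0 * q2)) ^ 2) • F =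
      (-12 : ℂ) • ((quadF q0 q1 q2) ^ 2 * transv 4 4 4 ((quadF q0 q1 q2) ^ 2) F) := by
  rw [← sub_eq_zero]
  have h : Gfun q0 q1 q2 F = 0 := by
    rw [← support_sum_monomial_coeff F]
    have : ∀ s : Finset (Fin 2 →₀ ℕ), s ⊆ F.support →
        Gfun q0 q1 q2 (∑ m ∈ s, monomial m (coeff m F)) = 0 := by
      intro s
      induction s using Finset.cons_induction with
      | empty => simpa using Gfun_zero q0 q1 q2
      | cons m s hm ih =>
        intro hs
        rw [Finset.sum_cons, Gfun_add, ih (Finset.Subset.trans (Finset.subset_cons _) hs)]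
        rw [add_zero]
        apply Gfun_monomial
        have hmem : m ∈ F.support := hs (Finset.mem_cons_self _ _)
        have hne : coeff m F ≠ 0 := mem_support_iff.mp hmem
        have hdeg : m.degree = 4 := by
          by_contra hd
          exact hne (hF.coeff_eq_zero hd)
        have : ∑ i : Fin 2, m i = m.degree := by
          rw [Finsupp.degree]
          exact (Finset.sum_subset (Finset.subset_univ _)
            (fun i _ h => Finsupp.notMem_support_iff.mp h)).symm
        rw [Fin.sum_univ_two] at this
        omega
    exact this F.support Finset.Subset.rfl
  exact h

/-- for `d = 4` and `z = (−12, 24/7, 3/5)`, one has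
`σ_{Q,z}(F) − Δ_Q²F = −12 Q² (Q²,F)₄`, i.e. explicitly
`−12(Q⁴,F)₄ + (24/7)Δ_Q(Q²,F)₂ − (2/5)Δ_Q²F = −12 Q²(Q²,F)₄`. -/
theorem stmt18 (q0 q1 q2 : ℂ) (F : MvPolynomial (Fin 2) ℂ) (hF : F.IsHomogeneous 4) :
    sigmaQ 4 (fun i => if i = 0 then (-12 : ℂ) else if i = 1 then 24 / 7 else 3 / 5)
          (quadF q0 q1 q2) (4 * (q1 ^ 2 - q0 * q2)) F -
        (4 * (q1 ^ 2 - q0 * q2)) ^ 2 • F =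
      (-12 : ℂ) • ((quadF q0 q1 q2) ^ 2 * transv 4 4 4 ((quadF q0 q1 q2) ^ 2) F) ∧
    (-12 : ℂ) • transv 8 4 4 ((quadF q0 q1 q2) ^ 4) F +
        (24 / 7 * (4 * (q1 ^ 2 - q0 * q2))) • transv 4 4 2 ((quadF q0 q1 q2) ^ 2) F -
        (2 / 5 * (4 * (q1 ^ 2 - q0 * q2)) ^ 2) • F =
      (-12 : ℂ) • ((quadF q0 q1 q2) ^ 2 * transv 4 4 4 ((quadF q0 q1 q2) ^ 2) F) := by
  have h2 := eqn2 q0 q1 q2 F hF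
  refine ⟨?_, h2⟩
  have hT0 : transv 0 4 0 (1 : MvPolynomial (Fin 2) ℂ) F = F := by
    norm_num [transv, pd, Nat.factorial]
  rw [sigmaQ]
  norm_num [Finset.sum_range_succ, hT0]
  linear_combination (norm := module) h2
end
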